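/- Computational completeness for ℜ: for every formula φ₀ of 𝓛, if there exist a Kripke model ⟨W, →, ⊩⟩ and a world w ∈ W with w ⊮ φ₀, then φ₀ is not a tautology of the standard enumeration ζ of nondeterministic partial recursive functions. -/

import Mathlib

/-- Formulas of the modal language 𝓛: propositional variables, ⊥, →, and ▷. -/
inductive Formula : Type
  | var : ℕ → Formula
  | bot : Formula
  | imp : Formula → Formula → Formula
  | tri : Formula → Formula → Formula
deriving DecidableEq

namespace Formula

/-- ¬φ := φ → ⊥ -/
def neg (φ : Formula) : Formula := imp φ bot
/-- ⊤ := ¬⊥ -/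
def top : Formula := neg bot
/-- φ ∨ ψ := ¬φ → ψ -/
def disj (φ ψ : Formula) : Formula := imp (neg φ) ψ
/-- φ ∧ ψ := ¬(φ → ¬ψ) -/
def conj (φ ψ : Formula) : Formula := neg (imp φ (neg ψ))

/-- `φ` is a substitution instance of a classical propositional tautology:
it evaluates to `true` under every boolean valuation of formulas that
respects `⊥` and `→` (variables and `▷`-formulas are treated as atoms). -/
def IsPropTaut (φ : Formula) : Prop :=
  ∀ v : Formula → Bool, v bot = false →
    (∀ a b, v (imp a b) = (!(v a) || v b)) → v φ = true

/-- Hilbert-style provability.  `Prv false` is the logic ℜ (axioms: classical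
tautologies, A1, A2, A3; rules: Modus Ponens and monotonicity M);
`Prv true` is the logic ℜ_d, which additionally has axiom A4. -/
inductive Prv : Bool → Formula → Prop
  | taut {d : Bool} {φ} : IsPropTaut φ → Prv d φ
  | a1 {d : Bool} (φ ψ χ) : Prv d (imp (tri φ ψ) (imp (tri χ ψ) (tri (disj φ χ) ψ)))
  | a2 {d : Bool} (φ) : Prv d (tri bot φ)
  | a3 {d : Bool} (φ) : Prv d (tri φ top)
  | a4 (φ ψ χ) : Prv true (imp (tri φ ψ) (imp (tri φ χ) (tri φ (conj ψ χ))))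
  | mp {d : Bool} {φ ψ} : Prv d (imp φ ψ) → Prv d φ → Prv d ψ
  | mono {d : Bool} {φ₁ φ₂ ψ₁ ψ₂} : Prv d (imp φ₁ φ₂) → Prv d (imp ψ₁ ψ₂) →
      Prv d (imp (tri φ₂ ψ₁) (tri φ₁ ψ₂))

/-- `Deriv d Δ φ`: φ is derivable from the hypotheses Δ together with all
theorems of the logic (`Prv d`) using only Modus Ponens. -/
inductive Deriv (d : Bool) (Δ : Set Formula) : Formula → Prop
  | hyp {φ} : φ ∈ Δ → Deriv d Δ φ
  | thm {φ} : Prv d φ → Deriv d Δ φ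
  | mp {φ ψ} : Deriv d Δ (imp φ ψ) → Deriv d Δ φ → Deriv d Δ ψ

/-- Conjunction of a list of formulas (empty conjunction is ⊤). -/
def conjList : List Formula → Formula
  | [] => top
  | φ :: l => conj φ (conjList l)

/-- ⋀Γ : conjunction of all formulas of a finite set Γ (⋀∅ = ⊤). -/
noncomputable def bigConj (Γ : Finset Formula) : Formula := conjList Γ.toList

/-- A set of formulas is consistent if ⊥ is not derivable from it. -/
def Consistent (d : Bool) (Δ : Set Formula) : Prop := ¬ Deriv d Δ bot

/-- The pair (u,v) is w-consistent: w ⊬ ⋀u ▷ ¬⋀v. -/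
def WCons (d : Bool) (w : Set Formula) (u v : Finset Formula) : Prop :=
  ¬ Deriv d w (tri (bigConj u) (neg (bigConj v)))

/-- The operation ∼: ∼(¬φ) = φ, and ∼φ = ¬φ if φ is not a negation. -/
def simNeg : Formula → Formula
  | imp φ bot => φ
  | φ => neg φ

/-- Φ is closed under subformulas. -/
def SubClosed (Φ : Finset Formula) : Prop :=
  (∀ a b, imp a b ∈ Φ → a ∈ Φ ∧ b ∈ Φ) ∧ (∀ a b, tri a b ∈ Φ → a ∈ Φ ∧ b ∈ Φ)

/-- Φ is closed under the operation ∼. -/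
def SimClosed (Φ : Finset Formula) : Prop := ∀ φ ∈ Φ, simNeg φ ∈ Φ

/-- w is a maximal consistent subset of Φ: w ⊆ Φ, w is consistent, and for
every φ ∈ Φ either φ ∈ w or ∼φ ∈ w. -/
def MaxCons (d : Bool) (Φ : Finset Formula) (w : Finset Formula) : Prop :=
  w ⊆ Φ ∧ Consistent d ↑w ∧ ∀ φ ∈ Φ, φ ∈ w ∨ simNeg φ ∈ w

/-- Kripke forcing: `rel w u v` means u →_w v, `val w p` means w ⊩ p. -/
def Forces {W : Type*} (rel : W → W → W → Prop) (val : W → ℕ → Prop) :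
    W → Formula → Prop
  | w, var p => val w p
  | _, bot => False
  | w, imp a b => Forces rel val w a → Forces rel val w b
  | w, tri a b => ∀ u v, rel w u v → Forces rel val u a →
      ∃ v', rel w u v' ∧ Forces rel val v' b

end Formula

/-- A Kripke model: a finite set of worlds, a ternary computability relation,
and a forcing relation between worlds and propositional variables. -/
structure KripkeModel where
  W : Type
  fin : Finite W
  rel : W → W → W → Prop
  val : W → ℕ → Prop

/-- A Kripke model is deterministic if for all worlds w, u there is at most
one v with u →_w v. -/
def KripkeModel.Deterministic (M : KripkeModel) : Prop :=
  ∀ w u v v', M.rel w u v → M.rel w u v' → v = v'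

/-- Forcing in a Kripke model. -/
def KripkeModel.Forces (M : KripkeModel) : M.W → Formula → Prop :=
  Formula.Forces M.rel M.val

/-- The standard enumeration of nondeterministic partial recursive functions:
ζ_w(u) = the set of possible outputs of machine (code) w on input u. -/
def zeta (w u : ℕ) : Set ℕ :=
  {v | ((Denumerable.ofNat Nat.Partrec.Code w).eval (Nat.pair u v)).Dom}

/-- The standard enumeration of deterministic partial recursive functions:
ξ_w(u) = the value of the partial recursive function with code w on input u. -/
def xi (w u : ℕ) : Part ℕ :=
  (Denumerable.ofNat Nat.Partrec.Code w).eval u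

namespace Formula

/-- Set semantics for nondeterministic partial recursive functions
(existential reading of ▷). -/
def semN (val : ℕ → Set ℕ) : Formula → Set ℕ
  | var p => val p
  | bot => ∅
  | imp a b => (Set.univ \ semN val a) ∪ semN val b
  | tri a b => {w | ∀ u ∈ semN val a, zeta w u ≠ ∅ → zeta w u ∩ semN val b ≠ ∅}

/-- Set semantics for deterministic partial recursive functions. -/
def semD (val : ℕ → Set ℕ) : Formula → Set ℕ
  | var p => val p
  | bot => ∅
  | imp a b => (Set.univ \ semD val a) ∪ semD val b
  | tri a b => {w | ∀ u ∈ semD val a, ∀ h : (xi w u).Dom, (xi w u).get h ∈ semD val b}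

/-- Universal set semantics for nondeterministic partial recursive functions:
every terminating computation path from φ* ends in ψ*. -/
def semU (val : ℕ → Set ℕ) : Formula → Set ℕ
  | var p => val p
  | bot => ∅
  | imp a b => (Set.univ \ semU val a) ∪ semU val b
  | tri a b => {w | ∀ u ∈ semU val a, zeta w u ⊆ semU val b}

/-- A canonical injective encoding of formulas as natural numbers. -/
def enc : Formula → ℕ
  | var n => 4 * n
  | bot => 1
  | imp a b => 4 * Nat.pair (enc a) (enc b) + 2
  | tri a b => 4 * Nat.pair (enc a) (enc b) + 3

end Formula

section CCAux

open Formula Nat.Partrec Nat.Partrec.Code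

private lemma cc_condPrim {n : ℕ} (l : List (Fin n × Fin n × Fin n)) :
    Primrec₂ (fun (c : Nat.Partrec.Code) (x : ℕ) => l.any fun t =>
      decide (x = Nat.pair t.1 (Nat.pair (Encodable.encode (curry c t.2.1))
        (Encodable.encode (curry c t.2.2))))) := by
  induction l with
  | nil => simpa using (Primrec₂.const false :
      Primrec₂ (fun (_ : Nat.Partrec.Code) (_ : ℕ) => false))
  | cons t l ih =>
    simp only [List.any_cons]
    have h1 : Primrec₂ (fun (c : Nat.Partrec.Code) (x : ℕ) =>
        decide (x = Nat.pair t.1 (Nat.pair (Encodable.encode (curry c t.2.1))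
          (Encodable.encode (curry c t.2.2))))) :=
      PrimrecPred.decide (Primrec.eq.comp Primrec.snd
        (Primrec₂.natPair.comp (Primrec.const _)
          (Primrec₂.natPair.comp
            (Primrec.encode.comp (primrec₂_curry.comp Primrec.fst (Primrec.const _)))
            (Primrec.encode.comp (primrec₂_curry.comp Primrec.fst (Primrec.const _))))))
    exact Primrec.or.comp h1 ih

private lemma cc_machines (n : ℕ) (R : Fin n → Fin n → Fin n → Prop) :
    ∃ N : Fin n → ℕ, Function.Injective N ∧
      ∀ (i : Fin n) (u : ℕ), zeta (N i) u =
        {v | ∃ j k : Fin n, R i j k ∧ u = N j ∧ v = N k} := by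
  classical
  set L : List (Fin n × Fin n × Fin n) :=
    ((List.finRange n) ×ˢ ((List.finRange n) ×ˢ (List.finRange n))).filter
      (fun t => decide (R t.1 t.2.1 t.2.2)) with hLdef
  have hmemL : ∀ t : Fin n × Fin n × Fin n, t ∈ L ↔ R t.1 t.2.1 t.2.2 := by
    intro t
    obtain ⟨a, b, cc⟩ := t
    simp [hLdef, List.mem_filter, List.mem_product, List.mem_finRange]
  set cnd : Nat.Partrec.Code → ℕ → Bool := fun c x => L.any fun t =>
      decide (x = Nat.pair t.1 (Nat.pair (Encodable.encode (curry c t.2.1))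
        (Encodable.encode (curry c t.2.2)))) with hcnd
  have hprim : Primrec₂ cnd := cc_condPrim L
  set f : Nat.Partrec.Code → ℕ →. ℕ := fun c x =>
      ((bif cnd c x then some 0 else none : Option ℕ) : Part ℕ) with hf
  have hfp : Partrec₂ f := by
    apply Computable.ofOption
    exact (Primrec.cond hprim (Primrec.const (some 0)) (Primrec.const none)).to_comp
  obtain ⟨c, hc⟩ := fixed_point₂ hfp
  refine ⟨fun i => Encodable.encode (curry c i), ?_, ?_⟩
  · intro i j hij
    have h2 := curry_inj (Encodable.encode_injective hij)
    exact Fin.val_injective h2.2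
  · intro i u
    ext v
    have hev : (Denumerable.ofNat Nat.Partrec.Code
        (Encodable.encode (curry c i))).eval (Nat.pair u v)
        = f c (Nat.pair (i : ℕ) (Nat.pair u v)) := by
      rw [Denumerable.ofNat_encode, eval_curry, hc]
    have hdom : (f c (Nat.pair (i : ℕ) (Nat.pair u v))).Dom ↔
        cnd c (Nat.pair (i : ℕ) (Nat.pair u v)) = true := by
      have key : ∀ b : Bool, ((bif b then some 0 else none : Option ℕ) : Part ℕ).Dom ↔
          b = true := by intro b; cases b <;> simp
      rw [hf]
      exact key _
    have hcnd_iff : cnd c (Nat.pair (i : ℕ) (Nat.pair u v)) = true ↔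
        ∃ j k : Fin n, R i j k ∧ u = Encodable.encode (curry c j) ∧
          v = Encodable.encode (curry c k) := by
      rw [hcnd]
      simp only [List.any_eq_true, decide_eq_true_eq]
      constructor
      · rintro ⟨t, htL, heq⟩
        obtain ⟨h1, h23⟩ := Nat.pair_eq_pair.mp heq
        obtain ⟨h2, h3⟩ := Nat.pair_eq_pair.mp h23
        have hi : i = t.1 := Fin.val_injective h1
        exact ⟨t.2.1, t.2.2, by rw [hi]; exact (hmemL t).mp htL, h2, h3⟩
      · rintro ⟨j, k, hR, hu, hv⟩
        exact ⟨(i, j, k), (hmemL (i, j, k)).mpr hR, by rw [hu, hv]⟩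
    simp only [zeta, Set.mem_setOf_eq, hev, hdom, hcnd_iff]

private lemma cc_forces_equiv {W W' : Type*} (e : W ≃ W') (rel : W → W → W → Prop)
    (val : W → ℕ → Prop) (φ : Formula) :
    ∀ w : W, Formula.Forces rel val w φ ↔
      Formula.Forces (fun a b c => rel (e.symm a) (e.symm b) (e.symm c))
        (fun a => val (e.symm a)) (e w) φ := by
  induction φ with
  | var p => intro w; simp [Formula.Forces, e.symm_apply_apply]
  | bot => intro w; simp [Formula.Forces]
  | imp a b iha ihb => intro w; simp only [Formula.Forces]; rw [iha, ihb]
  | tri a b iha ihb =>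
    intro w
    constructor
    · intro h u v hr ha
      rw [e.symm_apply_apply] at hr
      have ha' : Formula.Forces rel val (e.symm u) a := by
        have := iha (e.symm u); rw [e.apply_symm_apply] at this; exact this.mpr ha
      obtain ⟨v', hv', hb⟩ := h (e.symm u) (e.symm v) hr ha'
      refine ⟨e v', ?_, ?_⟩
      · simp only [e.symm_apply_apply]; exact hv'
      · exact (ihb v').mp hb
    · intro h u v hr ha
      have hr' : rel (e.symm (e w)) (e.symm (e u)) (e.symm (e v)) := by
        simp only [e.symm_apply_apply]; exact hr
      obtain ⟨v', hv', hb⟩ := h (e u) (e v) hr' ((iha u).mp ha)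
      refine ⟨e.symm v', ?_, ?_⟩
      · simp only [e.symm_apply_apply] at hv'; exact hv'
      · have := ihb (e.symm v'); rw [e.apply_symm_apply] at this; exact this.mpr hb

private lemma cc_semN_iff {n : ℕ} (R : Fin n → Fin n → Fin n → Prop)
    (pval : Fin n → ℕ → Prop) (N : Fin n → ℕ) (hinj : Function.Injective N)
    (hz : ∀ i u, zeta (N i) u = {v | ∃ j k : Fin n, R i j k ∧ u = N j ∧ v = N k})
    (φ : Formula) :
    ∀ i : Fin n,
      N i ∈ Formula.semN (fun p => {m | ∃ j : Fin n, m = N j ∧ pval j p}) φ ↔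
        Formula.Forces R pval i φ := by
  set val : ℕ → Set ℕ := fun p => {m | ∃ j : Fin n, m = N j ∧ pval j p} with hval
  induction φ with
  | var p =>
    intro i
    simp only [Formula.semN, Formula.Forces, hval, Set.mem_setOf_eq]
    constructor
    · rintro ⟨j, hj, hp⟩; rwa [hinj hj]
    · intro hp; exact ⟨i, rfl, hp⟩
  | bot => intro i; simp [Formula.semN, Formula.Forces]
  | imp a b iha ihb =>
    intro i
    simp only [Formula.semN, Formula.Forces, Set.mem_union, Set.mem_diff,
      Set.mem_univ, true_and]
    rw [← iha, ← ihb]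
    tauto
  | tri a b iha ihb =>
    intro i
    simp only [Formula.semN, Formula.Forces, Set.mem_setOf_eq]
    constructor
    · intro h j k hR ha
      have hu : N j ∈ Formula.semN val a := (iha j).mpr ha
      have hne : zeta (N i) (N j) ≠ ∅ := by
        rw [hz]
        intro hemp
        have : N k ∈ ({v | ∃ j' k' : Fin n, R i j' k' ∧ N j = N j' ∧ v = N k'} : Set ℕ) :=
          ⟨j, k, hR, rfl, rfl⟩
        rw [hemp] at this; exact this
      have hint := h (N j) hu hne
      obtain ⟨m, hm1, hm2⟩ := Set.nonempty_iff_ne_empty.mpr hint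
      rw [hz] at hm1
      obtain ⟨j', k', hR', hjj, hmk⟩ := hm1
      have : j = j' := hinj hjj
      subst this
      refine ⟨k', hR', (ihb k').mp ?_⟩
      rwa [← hmk]
    · intro h u hu hne
      obtain ⟨m, hm⟩ := Set.nonempty_iff_ne_empty.mpr hne
      rw [hz] at hm
      obtain ⟨j, k, hR, huj, _⟩ := hm
      subst huj
      obtain ⟨k', hR', hb⟩ := h j k hR ((iha j).mp hu)
      apply Set.nonempty_iff_ne_empty.mp
      exact ⟨N k', by rw [hz]; exact ⟨j, k', hR', rfl, rfl⟩, (ihb k').mpr hb⟩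

end CCAux


open Formula in
/-- Computational completeness for ℜ: if some world of some Kripke model does
not force φ₀, then φ₀ is not a tautology of the standard enumeration ζ of
nondeterministic partial recursive functions. -/
theorem computational_completeness_R (φ₀ : Formula)
    (h : ∃ (M : KripkeModel) (w : M.W), ¬ M.Forces w φ₀) :
    ¬ ∀ val : ℕ → Set ℕ, semN val φ₀ = Set.univ := by
  intro htaut
  obtain ⟨M, w, hw⟩ := h
  haveI := M.fin
  haveI : Fintype M.W := Fintype.ofFinite _
  let e : M.W ≃ Fin (Fintype.card M.W) := Fintype.equivFin M.W
  obtain ⟨N, hinj, hz⟩ := cc_machines (Fintype.card M.W)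
    (fun a b c => M.rel (e.symm a) (e.symm b) (e.symm c))
  have h2 : ¬ Formula.Forces (fun a b c => M.rel (e.symm a) (e.symm b) (e.symm c))
      (fun a => M.val (e.symm a)) (e w) φ₀ :=
    fun hf => hw ((cc_forces_equiv e M.rel M.val φ₀ w).mpr hf)
  have h3 := cc_semN_iff (fun a b c => M.rel (e.symm a) (e.symm b) (e.symm c))
    (fun a => M.val (e.symm a)) N hinj hz φ₀ (e w)
  have h4 : N (e w) ∉ semN (fun p => {m | ∃ j, m = N j ∧ M.val (e.symm j) p}) φ₀ :=
    fun hm => h2 (h3.mp hm)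
  apply h4
  rw [htaut]
  trivial
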